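/- For a positive integer N and k ∈ {1,…,N}, let M_k = [[0,1],[1,2^k]] ∈ GL₂(ℤ), let 𝓜 = {M_1,…,M_N, M_1⁻¹,…,M_N⁻¹} and 𝓘 = {I} (the identity matrix). Then the product set (𝓘 ∪ 𝓜)² = {XY : X, Y ∈ 𝓘 ∪ 𝓜} has exactly 4N² + 1 elements. -/
import Mathlib

open Finset Pointwise Matrix

section Aux

private lemma mat_eq_iff (a b c d e f g h : ℤ) :
    (!![a,b;c,d] = !![e,f;g,h]) ↔ (a = e ∧ b = f) ∧ c = g ∧ d = h := by
  constructor
  · intro hh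
    exact ⟨⟨congrFun (congrFun hh 0) 0, congrFun (congrFun hh 0) 1⟩,
      congrFun (congrFun hh 1) 0, congrFun (congrFun hh 1) 1⟩
  · rintro ⟨⟨rfl, rfl⟩, rfl, rfl⟩; rfl

private lemma p2pos (k : ℕ) : (0:ℤ) < 2 ^ k := pow_pos two_pos k

private lemma p2le {a b : ℕ} (h : a ≤ b) : (2:ℤ)^a ≤ 2^b :=
  pow_le_pow_right₀ one_le_two h

private lemma p2lt {a b : ℕ} (h : a < b) : (2:ℤ)^a < 2^b :=
  pow_lt_pow_right₀ one_lt_two h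

private lemma p2inj {a b : ℕ} (h : (2:ℤ)^a = 2^b) : a = b := by
  rcases lt_trichotomy a b with h' | h' | h'
  · exact absurd h (p2lt h').ne
  · exact h'
  · exact absurd h.symm (p2lt h').ne

private lemma two_le_p2 {k : ℕ} (hk : 1 ≤ k) : (2:ℤ) ≤ 2^k := by
  calc (2:ℤ) = 2^1 := (pow_one 2).symm
  _ ≤ 2^k := p2le hk

private lemma pin {a c : ℕ} {v : ℤ} (ha : 1 ≤ a) (hc : 1 ≤ c)
    (h1 : 2^(a-1) ≤ v) (h2 : v < 2^a) (h3 : 2^(c-1) ≤ v) (h4 : v < 2^c) : a = c := by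
  by_contra hne
  rcases Nat.lt_or_ge a c with h | h
  · have hle : a ≤ c - 1 := by omega
    have := p2le hle
    linarith
  · have hle : c ≤ a - 1 := by omega
    have := p2le hle
    linarith

private lemma bounds {a b : ℕ} (h : b < a) :
    (2:ℤ)^(a-1) ≤ 2^a - 2^b ∧ (2:ℤ)^a - 2^b < 2^a := by
  have h1 : (2:ℤ)^b ≤ 2^(a-1) := p2le (by omega)
  have h2 : (2:ℤ)^a = 2^(a-1) * 2 := by
    rw [← pow_succ]; congr 1; omega
  exact ⟨by linarith, by linarith [p2pos b]⟩

private lemma sub_inj_pos {a b c d : ℕ} (hab : b < a) (hcd : d < c)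
    (h : (2:ℤ)^a - 2^b = 2^c - 2^d) : a = c ∧ b = d := by
  obtain ⟨h1, h2⟩ := bounds hab
  obtain ⟨h3, h4⟩ := bounds hcd
  have hac : a = c := pin (by omega) (by omega) h1 h2 (by linarith) (by linarith)
  subst hac
  have hbd : (2:ℤ)^b = 2^d := by linarith
  exact ⟨rfl, p2inj hbd⟩

private lemma sub_inj {a b c d : ℕ} (hab : a ≠ b) (hcd : c ≠ d)
    (h : (2:ℤ)^a - 2^b = 2^c - 2^d) : a = c ∧ b = d := by
  rcases Nat.lt_or_ge b a with h1 | h1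
  · rcases Nat.lt_or_ge d c with h2 | h2
    · exact sub_inj_pos h1 h2 h
    · exfalso
      have h2' : c < d := by omega
      have := p2lt h1
      have := p2lt h2'
      linarith
  · have h1' : a < b := by omega
    have h2' : c < d := by
      by_contra hc
      have h2'' : d < c := by omega
      have := p2lt h1'
      have := p2lt h2''
      linarith
    have := sub_inj_pos h1' h2' (by linarith : (2:ℤ)^b - 2^a = 2^d - 2^c)
    exact ⟨this.2, this.1⟩

private lemma Minv (k : ℕ) :
    (!![0,1;1,2^k] : Matrix (Fin 2) (Fin 2) ℤ)⁻¹ = !![-2^k,1;1,0] := by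
  apply Matrix.inv_eq_right_inv
  rw [Matrix.mul_fin_two, Matrix.one_fin_two, mat_eq_iff]
  refine ⟨⟨by ring, by ring⟩, by ring, by ring⟩

private lemma mulFF (a b : ℕ) :
    (!![0,1;1,2^a] : Matrix (Fin 2) (Fin 2) ℤ) * !![0,1;1,2^b]
      = !![1, 2^b; 2^a, 1 + 2^a * 2^b] := by
  rw [Matrix.mul_fin_two, mat_eq_iff]
  refine ⟨⟨by ring, by ring⟩, by ring, by ring⟩

private lemma mulFG (a b : ℕ) :
    (!![0,1;1,2^a] : Matrix (Fin 2) (Fin 2) ℤ) * !![-2^b,1;1,0]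
      = !![1, 0; 2^a - 2^b, 1] := by
  rw [Matrix.mul_fin_two, mat_eq_iff]
  refine ⟨⟨by ring, by ring⟩, by ring, by ring⟩

private lemma mulGF (a b : ℕ) :
    (!![-2^a,1;1,0] : Matrix (Fin 2) (Fin 2) ℤ) * !![0,1;1,2^b]
      = !![1, 2^b - 2^a; 0, 1] := by
  rw [Matrix.mul_fin_two, mat_eq_iff]
  refine ⟨⟨by ring, by ring⟩, by ring, by ring⟩

private lemma mulGG (a b : ℕ) :
    (!![-2^a,1;1,0] : Matrix (Fin 2) (Fin 2) ℤ) * !![-2^b,1;1,0]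
      = !![2^a * 2^b + 1, -2^a; -2^b, 1] := by
  rw [Matrix.mul_fin_two, mat_eq_iff]
  refine ⟨⟨by ring, by ring⟩, by ring, by ring⟩

private lemma image_mul_image' {α : Type*} [DecidableEq α] [Mul α]
    (s t : Finset ℕ) (f g : ℕ → α) :
    s.image f * t.image g = (s ×ˢ t).image fun p => f p.1 * g p.2 := by
  ext x
  simp only [Finset.mem_mul, Finset.mem_image, Finset.mem_product]
  constructor
  · rintro ⟨_, ⟨a, ha, rfl⟩, _, ⟨b, hb, rfl⟩, rfl⟩
    exact ⟨(a, b), ⟨ha, hb⟩, rfl⟩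
  · rintro ⟨⟨a, b⟩, ⟨ha, hb⟩, rfl⟩
    exact ⟨f a, ⟨a, ha, rfl⟩, g b, ⟨b, hb, rfl⟩, rfl⟩

end Aux

set_option maxHeartbeats 1000000 in
/-- For `M_k = [[0,1],[1,2^k]]` and `𝓜 = {M_1,…,M_N, M_1⁻¹,…,M_N⁻¹}`, `𝓘 = {I}`, the product
set `(𝓘 ∪ 𝓜)²` has exactly `4N² + 1` elements. -/
theorem product_set_card_matrices (N : ℕ) (hN : 0 < N)
    (M : ℕ → Matrix (Fin 2) (Fin 2) ℤ)
    (hM : ∀ k, M k = !![0, 1; 1, 2 ^ k])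
    (ℳ : Finset (Matrix (Fin 2) (Fin 2) ℤ))
    (hℳ : ℳ = (Finset.Icc 1 N).image M ∪ (Finset.Icc 1 N).image (fun k => (M k)⁻¹))
    (ℐ : Finset (Matrix (Fin 2) (Fin 2) ℤ))
    (hℐ : ℐ = {(1 : Matrix (Fin 2) (Fin 2) ℤ)}) :
    ((ℐ ∪ ℳ) * (ℐ ∪ ℳ)).card = 4 * N ^ 2 + 1 := by
  subst hℐ hℳ
  classical
  set P := Finset.Icc 1 N with hP
  have hmemP : ∀ {k : ℕ}, k ∈ P → 1 ≤ k := fun hk => (Finset.mem_Icc.mp hk).1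
  have hPcard : P.card = N := by rw [hP, Nat.card_Icc]; omega
  have h1P : 1 ∈ P := by rw [hP, Finset.mem_Icc]; omega
  set f : ℕ → Matrix (Fin 2) (Fin 2) ℤ := fun k => !![0,1;1,2^k] with hf
  set g : ℕ → Matrix (Fin 2) (Fin 2) ℤ := fun k => !![-2^k,1;1,0] with hg
  have himf : P.image M = P.image f := Finset.image_congr fun k _ => hM k
  have himg : (P.image fun k => (M k)⁻¹) = P.image g :=
    Finset.image_congr fun k _ => by rw [hM k]; exact Minv k
  rw [himf, himg]
  set F := P.image f with hF
  set G := P.image g with hG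
  set AA := (P ×ˢ P).image
      (fun p : ℕ × ℕ => (!![1, 2^p.2; 2^p.1, 1 + 2^p.1 * 2^p.2] : Matrix (Fin 2) (Fin 2) ℤ))
    with hAA
  set DD := (P ×ˢ P).image
      (fun p : ℕ × ℕ => (!![2^p.1 * 2^p.2 + 1, -2^p.1; -2^p.2, 1] : Matrix (Fin 2) (Fin 2) ℤ))
    with hDD
  set Pne := (P ×ˢ P).filter (fun p : ℕ × ℕ => ¬ (p.1 = p.2)) with hPne
  set BB := Pne.image
      (fun p : ℕ × ℕ => (!![1, 0; 2^p.1 - 2^p.2, 1] : Matrix (Fin 2) (Fin 2) ℤ)) with hBB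
  set CC := Pne.image
      (fun p : ℕ × ℕ => (!![1, 2^p.2 - 2^p.1; 0, 1] : Matrix (Fin 2) (Fin 2) ℤ)) with hCC
  have h1l : ∀ s : Finset (Matrix (Fin 2) (Fin 2) ℤ), ({1} : Finset _) * s = s := by
    intro s; rw [Finset.singleton_mul]; simp
  have h1r : ∀ s : Finset (Matrix (Fin 2) (Fin 2) ℤ), s * ({1} : Finset _) = s := by
    intro s; rw [Finset.mul_singleton]; simp
  have hFF : F * F = AA := by
    rw [hF, image_mul_image', hAA]
    exact Finset.image_congr fun p _ => mulFF p.1 p.2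
  have hGG : G * G = DD := by
    rw [hG, image_mul_image', hDD]
    exact Finset.image_congr fun p _ => mulGG p.1 p.2
  have hdiagone : ∀ (u : ℕ × ℕ → Matrix (Fin 2) (Fin 2) ℤ),
      (∀ p : ℕ × ℕ, p.1 = p.2 → u p = 1) →
      ((P ×ˢ P).filter (fun p : ℕ × ℕ => p.1 = p.2)).image u = {1} := by
    intro u hu
    apply Finset.Subset.antisymm
    · intro x hx
      simp only [Finset.mem_image, Finset.mem_filter] at hx
      obtain ⟨p, ⟨_, hp⟩, rfl⟩ := hx
      simp [hu p hp]
    · intro x hx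
      simp only [Finset.mem_singleton] at hx
      subst hx
      simp only [Finset.mem_image, Finset.mem_filter, Finset.mem_product]
      exact ⟨(1,1), ⟨⟨h1P, h1P⟩, rfl⟩, hu (1,1) rfl⟩
  have hFG : F * G = {1} ∪ BB := by
    rw [hF, hG, image_mul_image']
    have e1 : (P ×ˢ P).image (fun p : ℕ × ℕ => f p.1 * g p.2)
        = (P ×ˢ P).image (fun p : ℕ × ℕ => (!![1, 0; 2^p.1 - 2^p.2, 1] : Matrix (Fin 2) (Fin 2) ℤ)) :=
      Finset.image_congr fun p _ => mulFG p.1 p.2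
    rw [e1]
    nth_rewrite 1 [← Finset.filter_union_filter_not_eq (fun p : ℕ × ℕ => p.1 = p.2) (P ×ˢ P)]
    rw [Finset.image_union, hBB, hPne]
    congr 1
    apply hdiagone
    intro p hp
    rw [hp, Matrix.one_fin_two, mat_eq_iff]
    norm_num
  have hGF : G * F = {1} ∪ CC := by
    rw [hF, hG, image_mul_image']
    have e1 : (P ×ˢ P).image (fun p : ℕ × ℕ => g p.1 * f p.2)
        = (P ×ˢ P).image (fun p : ℕ × ℕ => (!![1, 2^p.2 - 2^p.1; 0, 1] : Matrix (Fin 2) (Fin 2) ℤ)) :=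
      Finset.image_congr fun p _ => mulGF p.1 p.2
    rw [e1]
    nth_rewrite 1 [← Finset.filter_union_filter_not_eq (fun p : ℕ × ℕ => p.1 = p.2) (P ×ˢ P)]
    rw [Finset.image_union, hCC, hPne]
    congr 1
    apply hdiagone
    intro p hp
    rw [hp, Matrix.one_fin_two, mat_eq_iff]
    norm_num
  have key : ({1} ∪ (F ∪ G)) * ({1} ∪ (F ∪ G)) =
      {1} ∪ (F ∪ (G ∪ (AA ∪ (DD ∪ (BB ∪ CC))))) := by
    simp only [Finset.union_mul, Finset.mul_union, h1l, h1r, hFF, hGG, hFG, hGF]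
    ext x
    simp only [Finset.mem_union]
    tauto
  rw [key]
  -- entry characterizations
  have hQ1 : (1 : Matrix (Fin 2) (Fin 2) ℤ) 0 0 = 1 ∧ (1 : Matrix (Fin 2) (Fin 2) ℤ) 0 1 = 0
      ∧ (1 : Matrix (Fin 2) (Fin 2) ℤ) 1 0 = 0 := by
    rw [Matrix.one_fin_two]
    refine ⟨rfl, rfl, rfl⟩
  have hQF : ∀ x ∈ F, x 0 0 = 0 := by
    intro x hx
    rw [hF] at hx
    simp only [Finset.mem_image] at hx
    obtain ⟨k, _, rfl⟩ := hx
    rfl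
  have hQG : ∀ x ∈ G, x 0 0 < 0 := by
    intro x hx
    rw [hG] at hx
    simp only [Finset.mem_image] at hx
    obtain ⟨k, _, rfl⟩ := hx
    show (-2^k : ℤ) < 0
    have := p2pos k
    linarith
  have hQA : ∀ x ∈ AA, x 0 0 = 1 ∧ 2 ≤ x 0 1 ∧ 2 ≤ x 1 0 := by
    intro x hx
    rw [hAA] at hx
    simp only [Finset.mem_image, Finset.mem_product] at hx
    obtain ⟨p, ⟨hp1, hp2⟩, rfl⟩ := hx
    exact ⟨rfl, two_le_p2 (hmemP hp2), two_le_p2 (hmemP hp1)⟩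
  have hQD : ∀ x ∈ DD, 5 ≤ x 0 0 := by
    intro x hx
    rw [hDD] at hx
    simp only [Finset.mem_image, Finset.mem_product] at hx
    obtain ⟨p, ⟨hp1, hp2⟩, rfl⟩ := hx
    show (5 : ℤ) ≤ 2^p.1 * 2^p.2 + 1
    have h1 := two_le_p2 (hmemP hp1)
    have h2 := two_le_p2 (hmemP hp2)
    nlinarith
  have hQB : ∀ x ∈ BB, x 0 0 = 1 ∧ x 0 1 = 0 ∧ x 1 0 ≠ 0 := by
    intro x hx
    rw [hBB, hPne] at hx
    simp only [Finset.mem_image, Finset.mem_filter, Finset.mem_product] at hx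
    obtain ⟨p, ⟨_, hpne⟩, rfl⟩ := hx
    refine ⟨rfl, rfl, ?_⟩
    show (2^p.1 - 2^p.2 : ℤ) ≠ 0
    intro hcon
    exact hpne (p2inj (by linarith))
  have hQC : ∀ x ∈ CC, x 0 0 = 1 ∧ x 1 0 = 0 ∧ x 0 1 ≠ 0 := by
    intro x hx
    rw [hCC, hPne] at hx
    simp only [Finset.mem_image, Finset.mem_filter, Finset.mem_product] at hx
    obtain ⟨p, ⟨_, hpne⟩, rfl⟩ := hx
    refine ⟨rfl, rfl, ?_⟩
    show (2^p.2 - 2^p.1 : ℤ) ≠ 0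
    intro hcon
    exact hpne (p2inj (by linarith)).symm
  -- disjointness
  have D6 : Disjoint BB CC := Finset.disjoint_left.mpr (by
    intro x hx hy
    obtain ⟨_, _, h3⟩ := hQB x hx
    obtain ⟨_, h2, _⟩ := hQC x hy
    exact h3 h2)
  have D5 : Disjoint DD (BB ∪ CC) := Finset.disjoint_left.mpr (by
    intro x hx hy
    have h5 := hQD x hx
    rcases Finset.mem_union.mp hy with h | h
    · have := (hQB x h).1; linarith
    · have := (hQC x h).1; linarith)
  have D4 : Disjoint AA (DD ∪ (BB ∪ CC)) := Finset.disjoint_left.mpr (by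
    intro x hx hy
    obtain ⟨ha1, ha2, ha3⟩ := hQA x hx
    rcases Finset.mem_union.mp hy with h | h
    · have := hQD x h; linarith
    rcases Finset.mem_union.mp h with h | h
    · have := (hQB x h).2.1; linarith
    · have := (hQC x h).2.1; linarith)
  have D3 : Disjoint G (AA ∪ (DD ∪ (BB ∪ CC))) := Finset.disjoint_left.mpr (by
    intro x hx hy
    have hg0 := hQG x hx
    rcases Finset.mem_union.mp hy with h | h
    · have := (hQA x h).1; linarith
    rcases Finset.mem_union.mp h with h | h
    · have := hQD x h; linarith
    rcases Finset.mem_union.mp h with h | h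
    · have := (hQB x h).1; linarith
    · have := (hQC x h).1; linarith)
  have D2 : Disjoint F (G ∪ (AA ∪ (DD ∪ (BB ∪ CC)))) := Finset.disjoint_left.mpr (by
    intro x hx hy
    have hf0 := hQF x hx
    rcases Finset.mem_union.mp hy with h | h
    · have := hQG x h; linarith
    rcases Finset.mem_union.mp h with h | h
    · have := (hQA x h).1; linarith
    rcases Finset.mem_union.mp h with h | h
    · have := hQD x h; linarith
    rcases Finset.mem_union.mp h with h | h
    · have := (hQB x h).1; linarith
    · have := (hQC x h).1; linarith)
  have D1 : Disjoint ({1} : Finset (Matrix (Fin 2) (Fin 2) ℤ))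
      (F ∪ (G ∪ (AA ∪ (DD ∪ (BB ∪ CC))))) := Finset.disjoint_left.mpr (by
    intro x hx hy
    rw [Finset.mem_singleton] at hx
    subst hx
    obtain ⟨h11, h12, h13⟩ := hQ1
    rcases Finset.mem_union.mp hy with h | h
    · have := hQF _ h; linarith
    rcases Finset.mem_union.mp h with h | h
    · have := hQG _ h; linarith
    rcases Finset.mem_union.mp h with h | h
    · have := (hQA _ h).2.1; linarith
    rcases Finset.mem_union.mp h with h | h
    · have := hQD _ h; linarith
    rcases Finset.mem_union.mp h with h | h
    · exact (hQB _ h).2.2 h13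
    · exact (hQC _ h).2.2 h12)
  rw [Finset.card_union_of_disjoint D1, Finset.card_union_of_disjoint D2,
    Finset.card_union_of_disjoint D3, Finset.card_union_of_disjoint D4,
    Finset.card_union_of_disjoint D5, Finset.card_union_of_disjoint D6,
    Finset.card_singleton]
  have injf : Set.InjOn f (P : Set ℕ) := by
    intro a _ b _ h
    simp only [hf] at h
    rw [mat_eq_iff] at h
    exact p2inj h.2.2
  have injg : Set.InjOn g (P : Set ℕ) := by
    intro a _ b _ h
    simp only [hg] at h
    rw [mat_eq_iff] at h
    have h11 := h.1.1
    exact p2inj (by linarith)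
  have cardF : F.card = N := by rw [hF, Finset.card_image_of_injOn injf, hPcard]
  have cardG : G.card = N := by rw [hG, Finset.card_image_of_injOn injg, hPcard]
  have injA : Set.InjOn
      (fun p : ℕ × ℕ => (!![1, 2^p.2; 2^p.1, 1 + 2^p.1 * 2^p.2] : Matrix (Fin 2) (Fin 2) ℤ))
      ((P ×ˢ P : Finset (ℕ × ℕ)) : Set (ℕ × ℕ)) := by
    intro p _ q _ h
    rw [mat_eq_iff] at h
    exact Prod.ext (p2inj h.2.1) (p2inj h.1.2)
  have injD : Set.InjOn
      (fun p : ℕ × ℕ => (!![2^p.1 * 2^p.2 + 1, -2^p.1; -2^p.2, 1] : Matrix (Fin 2) (Fin 2) ℤ))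
      ((P ×ˢ P : Finset (ℕ × ℕ)) : Set (ℕ × ℕ)) := by
    intro p _ q _ h
    rw [mat_eq_iff] at h
    have h1 := h.1.2
    have h2 := h.2.1
    exact Prod.ext (p2inj (by linarith)) (p2inj (by linarith))
  have cardAA : AA.card = N * N := by
    rw [hAA, Finset.card_image_of_injOn injA, Finset.card_product, hPcard]
  have cardDD : DD.card = N * N := by
    rw [hDD, Finset.card_image_of_injOn injD, Finset.card_product, hPcard]
  have hdiagcard : ((P ×ˢ P).filter (fun p : ℕ × ℕ => p.1 = p.2)).card = N := by
    have hde : (P ×ˢ P).filter (fun p : ℕ × ℕ => p.1 = p.2) = P.image (fun a => (a, a)) := by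
      ext p
      simp only [Finset.mem_filter, Finset.mem_product, Finset.mem_image]
      constructor
      · rintro ⟨⟨h1, _⟩, h3⟩
        exact ⟨p.1, h1, by rw [Prod.ext_iff]; exact ⟨rfl, h3⟩⟩
      · rintro ⟨a, ha, rfl⟩
        exact ⟨⟨ha, ha⟩, rfl⟩
    have injd : Set.InjOn (fun a : ℕ => (a, a)) (P : Set ℕ) := by
      intro a _ b _ h
      exact (Prod.ext_iff.mp h).1
    rw [hde, Finset.card_image_of_injOn injd, hPcard]
  have cardPne : Pne.card = N * N - N := by
    have hsum := Finset.card_filter_add_card_filter_not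
      (s := P ×ˢ P) (p := fun p : ℕ × ℕ => p.1 = p.2)
    rw [hdiagcard, Finset.card_product, hPcard] at hsum
    rw [hPne]
    omega
  have injB : Set.InjOn
      (fun p : ℕ × ℕ => (!![1, 0; 2^p.1 - 2^p.2, 1] : Matrix (Fin 2) (Fin 2) ℤ))
      (Pne : Set (ℕ × ℕ)) := by
    intro p hp q hq h
    simp only [hPne, Finset.coe_filter, Finset.mem_product, Set.mem_setOf_eq] at hp hq
    rw [mat_eq_iff] at h
    have := sub_inj hp.2 hq.2 h.2.1
    exact Prod.ext this.1 this.2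
  have injC : Set.InjOn
      (fun p : ℕ × ℕ => (!![1, 2^p.2 - 2^p.1; 0, 1] : Matrix (Fin 2) (Fin 2) ℤ))
      (Pne : Set (ℕ × ℕ)) := by
    intro p hp q hq h
    simp only [hPne, Finset.coe_filter, Finset.mem_product, Set.mem_setOf_eq] at hp hq
    rw [mat_eq_iff] at h
    have := sub_inj (fun hc => hp.2 hc.symm) (fun hc => hq.2 hc.symm) h.1.2
    exact Prod.ext this.2 this.1
  have cardBB : BB.card = N * N - N := by
    rw [hBB, Finset.card_image_of_injOn injB, cardPne]
  have cardCC : CC.card = N * N - N := by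
    rw [hCC, Finset.card_image_of_injOn injC, cardPne]
  rw [cardF, cardG, cardAA, cardDD, cardBB, cardCC]
  have hNN : N ≤ N * N := Nat.le_mul_of_pos_left N hN
  have hpow : N ^ 2 = N * N := sq N
  rw [hpow]
  omega
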